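/- Let α > 0 and a > 0 with αa > 1, let κ₁ be the unique solution in (0, α/2) of (α/2)·exp(−2κa) = α/2 − κ, and set ξ₁ := −κ₁². Define φ₁ : ℝ → ℝ by φ₁(x) := sinh(κ₁ x) for |x| ≤ a and φ₁(x) := sign(x)·sinh(κ₁ a)·exp(−κ₁(|x| − a)) for |x| > a. Then φ₁ is continuous, odd (in particular φ₁(0) = 0), bounded and square-integrable, twice differentiable at every x ∉ {−a, a} with −φ₁''(x) = ξ₁ φ₁(x) there, its derivative has one-sided limits at ±a, and φ₁'(a+0) − φ₁'(a−0) = −αφ₁(a) and φ₁'(−a+0) − φ₁'(−a−0) = −αφ₁(−a). -/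

import Mathlib

open Filter Topology MeasureTheory

/-- for `αa > 1`, the explicit odd function `φ₁` is the bounded,
square-integrable excited-state eigenfunction, with eigenvalue `ξ₁ = −κ₁²`,
of the one-dimensional operator with two delta interactions of strength `α`
at `±a`. -/
theorem excited_state_eigenfunction
    (α a κ₁ ξ₁ : ℝ) (hα : 0 < α) (ha : 0 < a) (haa : 1 < α * a)
    (hκ₁ : κ₁ ∈ Set.Ioo 0 (α / 2) ∧
      (α / 2) * Real.exp (-2 * κ₁ * a) = α / 2 - κ₁)
    (hξ₁ : ξ₁ = -κ₁ ^ 2)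
    (φ₁ : ℝ → ℝ)
    (hφ₁ : ∀ x : ℝ, φ₁ x =
      if |x| ≤ a then Real.sinh (κ₁ * x)
      else (if 0 < x then (1 : ℝ) else -1) *
        Real.sinh (κ₁ * a) * Real.exp (-κ₁ * (|x| - a))) :
    Continuous φ₁ ∧
    (∀ x : ℝ, φ₁ (-x) = -φ₁ x) ∧
    φ₁ 0 = 0 ∧
    (∃ C : ℝ, ∀ x : ℝ, |φ₁ x| ≤ C) ∧
    Integrable (fun x : ℝ => (φ₁ x) ^ 2) ∧
    (∀ x : ℝ, x ≠ -a → x ≠ a →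
      DifferentiableAt ℝ φ₁ x ∧ DifferentiableAt ℝ (deriv φ₁) x ∧
      -deriv (deriv φ₁) x = ξ₁ * φ₁ x) ∧
    (∃ Lpa Lma Lpb Lmb : ℝ,
      Tendsto (deriv φ₁) (𝓝[>] a) (𝓝 Lpa) ∧
      Tendsto (deriv φ₁) (𝓝[<] a) (𝓝 Lma) ∧
      Tendsto (deriv φ₁) (𝓝[>] (-a)) (𝓝 Lpb) ∧
      Tendsto (deriv φ₁) (𝓝[<] (-a)) (𝓝 Lmb) ∧
      Lpa - Lma = -α * φ₁ a ∧
      Lpb - Lmb = -α * φ₁ (-a)) := by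
  open Set in
  obtain ⟨⟨hκp, hκlt⟩, hκeq⟩ := hκ₁
  -- global continuous formula
  have hG : ∀ x, φ₁ x = Real.sinh (κ₁ * (max (min x a) (-a))) *
      Real.exp (-κ₁ * (max |x| a - a)) := by
    intro x
    rw [hφ₁]
    rcases le_or_gt |x| a with h | h
    · rw [if_pos h]
      obtain ⟨h1, h2⟩ := abs_le.1 h
      rw [min_eq_left h2, max_eq_left h1, max_eq_right h]
      simp
    · rw [if_neg (not_le.2 h)]
      rcases lt_or_ge 0 x with hx | hx
      · have hax : |x| = x := abs_of_pos hx
        rw [hax] at h ⊢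
        rw [if_pos hx, min_eq_right h.le, max_eq_left (by linarith), max_eq_left h.le]
        ring
      · have hax : |x| = -x := abs_of_nonpos hx
        rw [hax] at h ⊢
        rw [if_neg (by linarith), min_eq_left (by linarith), max_eq_right (by linarith),
          max_eq_left h.le, mul_neg, Real.sinh_neg]
        ring
  -- continuity
  have hcont : Continuous φ₁ := by
    rw [show φ₁ = fun x => Real.sinh (κ₁ * (max (min x a) (-a))) *
      Real.exp (-κ₁ * (max |x| a - a)) from funext hG]
    fun_prop
  -- oddness
  have hodd : ∀ x, φ₁ (-x) = -φ₁ x := by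
    intro x
    rw [hφ₁, hφ₁, abs_neg]
    rcases le_or_gt |x| a with h | h
    · rw [if_pos h, if_pos h, mul_neg, Real.sinh_neg]
    · rw [if_neg (not_le.2 h), if_neg (not_le.2 h)]
      rcases lt_or_ge 0 x with hx | hx
      · rw [if_pos hx, if_neg (by linarith)]; ring
      · have hx0 : x < 0 := lt_of_le_of_ne hx (by rintro rfl; simp at h; linarith)
        rw [if_pos (by linarith), if_neg (by linarith)]; ring
  -- value at 0
  have hzero : φ₁ 0 = 0 := by
    rw [hφ₁, if_pos (by simp [ha.le])]; simp
  -- boundedness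
  have hbdd : ∀ x, |φ₁ x| ≤ Real.sinh (κ₁ * a) := by
    intro x
    rw [hG]
    have hc1 : max (min x a) (-a) ≤ a := max_le (min_le_right x a) (by linarith)
    have hc2 : -a ≤ max (min x a) (-a) := le_max_right _ _
    have habs : |κ₁ * max (min x a) (-a)| ≤ κ₁ * a := by
      rw [abs_mul, abs_of_pos hκp]
      exact mul_le_mul_of_nonneg_left (abs_le.2 ⟨hc2, hc1⟩) hκp.le
    have h1 : |Real.sinh (κ₁ * (max (min x a) (-a)))| ≤ Real.sinh (κ₁ * a) := by
      rw [Real.abs_sinh]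
      exact Real.sinh_le_sinh.2 habs
    have h2 : Real.exp (-κ₁ * (max |x| a - a)) ≤ 1 := by
      rw [Real.exp_le_one_iff]
      have : a ≤ max |x| a := le_max_right _ _
      nlinarith
    have h3 : (0:ℝ) < Real.exp (-κ₁ * (max |x| a - a)) := Real.exp_pos _
    rw [abs_mul, abs_of_pos h3]
    calc _ ≤ Real.sinh (κ₁*a) * Real.exp (-κ₁ * (max |x| a - a)) :=
            mul_le_mul_of_nonneg_right h1 h3.le
      _ ≤ Real.sinh (κ₁*a) * 1 :=
            mul_le_mul_of_nonneg_left h2 (le_trans (abs_nonneg _) h1)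
      _ = _ := mul_one _
  -- integrability of the square
  have hint : Integrable (fun x : ℝ => (φ₁ x) ^ 2) := by
    have hIoi : IntegrableOn (fun x : ℝ => (φ₁ x) ^ 2) (Ioi a) := by
      have hexp : IntegrableOn (fun x : ℝ => (Real.sinh (κ₁*a))^2 * Real.exp (2*κ₁*a) *
          Real.exp (-(2*κ₁) * x)) (Ioi a) :=
        (exp_neg_integrableOn_Ioi a (by linarith)).const_mul _
      apply hexp.congr_fun _ measurableSet_Ioi
      intro x hx
      have hx' : a < x := hx
      have habs : |x| = x := abs_of_pos (by linarith)
      show _ = φ₁ x ^ 2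
      rw [hφ₁, habs, if_neg (by linarith), if_pos (by linarith)]
      have hkey : Real.exp (2*κ₁*a) * Real.exp (-(2*κ₁) * x) = Real.exp (-κ₁*(x-a)) ^ 2 := by
        rw [sq, ← Real.exp_add, ← Real.exp_add]
        exact congrArg Real.exp (by ring)
      show Real.sinh (κ₁*a)^2 * Real.exp (2*κ₁*a) * Real.exp (-(2*κ₁) * x) = _
      rw [mul_assoc, hkey, one_mul, mul_pow]
    have hIio : IntegrableOn (fun x : ℝ => (φ₁ x) ^ 2) (Iio (-a)) := by
      have h2 := (MeasurePreserving.integrableOn_comp_preimage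
        (Measure.measurePreserving_neg (volume : Measure ℝ))
        (Homeomorph.neg ℝ).measurableEmbedding).2 hIoi
      have hpre : ((fun x : ℝ => -x) ⁻¹' (Ioi a)) = Iio (-a) := by ext y; simp [lt_neg]
      rw [hpre] at h2
      apply h2.congr_fun _ measurableSet_Iio
      intro x hx
      show φ₁ (-x) ^ 2 = φ₁ x ^ 2
      rw [hodd x]; ring
    have hIcc : IntegrableOn (fun x : ℝ => (φ₁ x) ^ 2) (Icc (-a) a) :=
      ((hcont.pow 2).continuousOn).integrableOn_Icc
    have huniv : (univ : Set ℝ) ⊆ Iio (-a) ∪ (Icc (-a) a ∪ Ioi a) := by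
      intro x _
      rcases lt_or_ge x (-a) with h | h
      · exact Or.inl h
      · rcases le_or_gt x a with h' | h'
        · exact Or.inr (Or.inl ⟨h, h'⟩)
        · exact Or.inr (Or.inr h')
    have := (hIio.union (hIcc.union hIoi)).mono_set huniv
    rwa [integrableOn_univ] at this
  -- derivative facts for the local model functions
  have hg1 : ∀ y : ℝ, HasDerivAt (fun z => Real.sinh (κ₁ * z)) (κ₁ * Real.cosh (κ₁ * y)) y := by
    intro y
    have := ((hasDerivAt_id y).const_mul κ₁).sinh
    simp only [id_eq] at this
    simpa [mul_comm] using this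
  have hg1' : ∀ y : ℝ, HasDerivAt (fun z => κ₁ * Real.cosh (κ₁ * z))
      (κ₁ ^ 2 * Real.sinh (κ₁ * y)) y := by
    intro y
    have := (((hasDerivAt_id y).const_mul κ₁).cosh).const_mul κ₁
    simp only [id_eq] at this
    exact this.congr_deriv (by ring)
  have hg2 : ∀ y : ℝ, HasDerivAt (fun z => Real.sinh (κ₁ * a) * Real.exp (-κ₁ * (z - a)))
      (-κ₁ * (Real.sinh (κ₁ * a) * Real.exp (-κ₁ * (y - a)))) y := by
    intro y
    have := ((((hasDerivAt_id y).sub_const a).const_mul (-κ₁)).exp).const_mul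
      (Real.sinh (κ₁ * a))
    simp only [id_eq] at this
    exact this.congr_deriv (by ring)
  have hg2' : ∀ y : ℝ, HasDerivAt (fun z => -κ₁ * (Real.sinh (κ₁ * a) * Real.exp (-κ₁ * (z - a))))
      (κ₁ ^ 2 * (Real.sinh (κ₁ * a) * Real.exp (-κ₁ * (y - a)))) y := by
    intro y
    have := (hg2 y).const_mul (-κ₁)
    exact this.congr_deriv (by ring)
  have hg3 : ∀ y : ℝ, HasDerivAt (fun z => -(Real.sinh (κ₁ * a) * Real.exp (κ₁ * (z + a))))
      (κ₁ * -(Real.sinh (κ₁ * a) * Real.exp (κ₁ * (y + a)))) y := by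
    intro y
    have := (((((hasDerivAt_id y).add_const a).const_mul κ₁).exp).const_mul
      (Real.sinh (κ₁ * a))).neg
    simp only [id_eq] at this
    exact this.congr_deriv (by ring)
  have hg3' : ∀ y : ℝ, HasDerivAt (fun z => κ₁ * -(Real.sinh (κ₁ * a) * Real.exp (κ₁ * (z + a))))
      (κ₁ ^ 2 * -(Real.sinh (κ₁ * a) * Real.exp (κ₁ * (y + a)))) y := by
    intro y
    have := (hg3 y).const_mul κ₁
    exact this.congr_deriv (by ring)
  -- local eventual equalities
  have heqIn : ∀ x : ℝ, |x| < a → φ₁ =ᶠ[𝓝 x] fun z => Real.sinh (κ₁ * z) := by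
    intro x hx
    have hopen : IsOpen {y : ℝ | |y| < a} := isOpen_Iio.preimage continuous_abs
    filter_upwards [hopen.mem_nhds hx] with y hy
    rw [hφ₁ y, if_pos (le_of_lt hy)]
  have heqR : ∀ x ∈ Ioi a, φ₁ =ᶠ[𝓝 x]
      fun z => Real.sinh (κ₁ * a) * Real.exp (-κ₁ * (z - a)) := by
    intro x hx
    filter_upwards [isOpen_Ioi.mem_nhds hx] with y hy
    have hy' : a < y := hy
    have h0 : |y| = y := abs_of_pos (by linarith)
    rw [hφ₁ y, h0, if_neg (by linarith), if_pos (by linarith), one_mul]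
  have heqL : ∀ x ∈ Iio (-a), φ₁ =ᶠ[𝓝 x]
      fun z => -(Real.sinh (κ₁ * a) * Real.exp (κ₁ * (z + a))) := by
    intro x hx
    filter_upwards [isOpen_Iio.mem_nhds hx] with y hy
    have hy' : y < -a := hy
    have h0 : |y| = -y := abs_of_neg (by linarith)
    rw [hφ₁ y, h0, if_neg (by linarith), if_neg (by linarith)]
    rw [show -κ₁ * (-y - a) = κ₁ * (y + a) by ring]
    ring
  -- generic argument turning a local smooth model into the eigenvalue equation
  have main : ∀ (g g' : ℝ → ℝ) (x : ℝ), φ₁ =ᶠ[𝓝 x] g →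
      (∀ y, HasDerivAt g (g' y) y) → (∀ y, HasDerivAt g' (κ₁ ^ 2 * g y) y) →
      DifferentiableAt ℝ φ₁ x ∧ DifferentiableAt ℝ (deriv φ₁) x ∧
        -deriv (deriv φ₁) x = ξ₁ * φ₁ x := by
    intro g g' x heq hg hg'
    have hdg : deriv g = g' := funext fun y => (hg y).deriv
    have hdφ : deriv φ₁ =ᶠ[𝓝 x] deriv g := heq.deriv
    refine ⟨(hg x).differentiableAt.congr_of_eventuallyEq heq, ?_, ?_⟩
    · rw [hdg] at hdφ
      exact (hg' x).differentiableAt.congr_of_eventuallyEq hdφ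
    · rw [hdφ.deriv_eq, hdg, (hg' x).deriv, heq.eq_of_nhds, hξ₁]
      ring
  refine ⟨hcont, hodd, hzero, ⟨Real.sinh (κ₁ * a), hbdd⟩, hint, ?_, ?_⟩
  · -- the ODE away from ±a
    intro x hxm hxp
    rcases lt_or_ge |x| a with h | h
    · exact main _ _ x (heqIn x h) hg1
        (fun y => by simpa using hg1' y)
    · rcases lt_trichotomy x a with h1 | h1 | h1
      · -- then x < -a (since |x| ≥ a and x ≠ ±a)
        have h2 : x < -a := by
          rcases le_or_gt 0 x with h3 | h3
          · exfalso
            rw [abs_of_nonneg h3] at h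
            rcases h.lt_or_eq with h4 | h4
            · linarith
            · exact hxp h4.symm
          · rw [abs_of_neg h3] at h
            rcases h.lt_or_eq with h4 | h4
            · linarith
            · exact absurd (by linarith : x = -a) hxm
        exact main _ _ x (heqL x h2) hg3 hg3'
      · exact absurd h1 hxp
      · exact main _ _ x (heqR x h1) hg2 hg2'
  · -- one-sided limits of the derivative and the jump conditions
    have hderivR : ∀ x ∈ Ioi a, deriv φ₁ x =
        -κ₁ * (Real.sinh (κ₁ * a) * Real.exp (-κ₁ * (x - a))) := by
      intro x hx
      rw [(heqR x hx).deriv_eq, (hg2 x).deriv]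
    have hderivL : ∀ x ∈ Iio (-a), deriv φ₁ x =
        κ₁ * -(Real.sinh (κ₁ * a) * Real.exp (κ₁ * (x + a))) := by
      intro x hx
      rw [(heqL x hx).deriv_eq, (hg3 x).deriv]
    have hderivIn : ∀ x ∈ Ioo (-a) a, deriv φ₁ x = κ₁ * Real.cosh (κ₁ * x) := by
      intro x hx
      have : |x| < a := abs_lt.2 ⟨hx.1, hx.2⟩
      rw [(heqIn x this).deriv_eq, (hg1 x).deriv]
    refine ⟨-κ₁ * (Real.sinh (κ₁ * a) * Real.exp (-κ₁ * (a - a))),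
      κ₁ * Real.cosh (κ₁ * a),
      κ₁ * Real.cosh (κ₁ * (-a)),
      κ₁ * -(Real.sinh (κ₁ * a) * Real.exp (κ₁ * (-a + a))), ?_, ?_, ?_, ?_, ?_, ?_⟩
    · refine Tendsto.congr'
        (f₁ := fun x => -κ₁ * (Real.sinh (κ₁ * a) * Real.exp (-κ₁ * (x - a)))) ?_ ?_
      · filter_upwards [self_mem_nhdsWithin] with y hy
        exact (hderivR y hy).symm
      · exact ((by fun_prop : Continuous fun x : ℝ =>
          -κ₁ * (Real.sinh (κ₁ * a) * Real.exp (-κ₁ * (x - a)))).tendsto a).mono_left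
          nhdsWithin_le_nhds
    · refine Tendsto.congr' (f₁ := fun x => κ₁ * Real.cosh (κ₁ * x)) ?_ ?_
      · filter_upwards [Ioo_mem_nhdsLT_of_mem (⟨by linarith, le_refl a⟩ : a ∈ Ioc (-a) a)]
          with y hy
        exact (hderivIn y hy).symm
      · exact ((by fun_prop : Continuous fun x : ℝ =>
          κ₁ * Real.cosh (κ₁ * x)).tendsto a).mono_left nhdsWithin_le_nhds
    · refine Tendsto.congr' (f₁ := fun x => κ₁ * Real.cosh (κ₁ * x)) ?_ ?_
      · filter_upwards [Ioo_mem_nhdsGT_of_mem (⟨le_refl (-a), by linarith⟩ : (-a) ∈ Ico (-a) a)]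
          with y hy
        exact (hderivIn y hy).symm
      · exact ((by fun_prop : Continuous fun x : ℝ =>
          κ₁ * Real.cosh (κ₁ * x)).tendsto (-a)).mono_left nhdsWithin_le_nhds
    · refine Tendsto.congr'
        (f₁ := fun x => κ₁ * -(Real.sinh (κ₁ * a) * Real.exp (κ₁ * (x + a)))) ?_ ?_
      · filter_upwards [self_mem_nhdsWithin] with y hy
        exact (hderivL y hy).symm
      · exact ((by fun_prop : Continuous fun x : ℝ =>
          κ₁ * -(Real.sinh (κ₁ * a) * Real.exp (κ₁ * (x + a)))).tendsto (-a)).mono_left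
          nhdsWithin_le_nhds
    · -- jump at a
      have hφa : φ₁ a = Real.sinh (κ₁ * a) := by
        rw [hφ₁, if_pos (by rw [abs_of_pos ha])]
      rw [hφa]
      have hEF : Real.exp (κ₁ * a) * Real.exp (-(κ₁ * a)) = 1 := by
        rw [← Real.exp_add]; simp
      have hκeq' : α / 2 * (Real.exp (-(κ₁ * a)) * Real.exp (-(κ₁ * a))) = α / 2 - κ₁ := by
        rw [← Real.exp_add, show -(κ₁*a) + -(κ₁*a) = -2*κ₁*a by ring]
        exact hκeq
      rw [show -κ₁ * (a - a) = -(0:ℝ) * κ₁ by ring]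
      simp only [neg_zero, zero_mul, Real.exp_zero, mul_one]
      rw [Real.sinh_eq, Real.cosh_eq]
      linear_combination (-(Real.exp (κ₁ * a))) * hκeq' +
        (α * Real.exp (-(κ₁ * a)) / 2) * hEF
    · -- jump at -a
      have hφa : φ₁ (-a) = -Real.sinh (κ₁ * a) := by
        rw [hφ₁, if_pos (by rw [abs_neg, abs_of_pos ha]), mul_neg, Real.sinh_neg]
      rw [hφa]
      have hEF : Real.exp (κ₁ * a) * Real.exp (-(κ₁ * a)) = 1 := by
        rw [← Real.exp_add]; simp
      have hκeq' : α / 2 * (Real.exp (-(κ₁ * a)) * Real.exp (-(κ₁ * a))) = α / 2 - κ₁ := by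
        rw [← Real.exp_add, show -(κ₁*a) + -(κ₁*a) = -2*κ₁*a by ring]
        exact hκeq
      rw [mul_neg, Real.cosh_neg, show κ₁ * (-a + a) = (0:ℝ) by ring]
      simp only [Real.exp_zero, mul_one]
      rw [Real.sinh_eq, Real.cosh_eq]
      linear_combination (Real.exp (κ₁ * a)) * hκeq' -
        (α * Real.exp (-(κ₁ * a)) / 2) * hEF
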